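/- For ξ, η ∈ ℝ² set Φ₂±(ξ,η) = ⟨ξ⟩ - ⟨ξ-η⟩ ± |η|, where ⟨ζ⟩ = sqrt(1+|ζ|²). Then for η ≠ 0, |Φ₂±(ξ,η)| ≥ c |η| / (⟨η⟩ + ⟨ξ-η⟩)² for a universal constant c > 0. Moreover, Φ₁±(ξ,η) = ⟨ξ⟩ + ⟨ξ-η⟩ ± |η| satisfies |Φ₁±(ξ,η)| ≥ c (⟨ξ⟩^{-1} + ⟨ξ-η⟩^{-1}). -/

import Mathlib

/-- Japanese bracket `⟨ζ⟩ = sqrt(1+‖ζ‖²)` on ℝ². -/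
noncomputable def jb (ζ : EuclideanSpace ℝ (Fin 2)) : ℝ := Real.sqrt (1 + ‖ζ‖ ^ 2)

lemma jb_sq (ζ : EuclideanSpace ℝ (Fin 2)) : jb ζ ^ 2 = 1 + ‖ζ‖ ^ 2 := by
  unfold jb
  rw [Real.sq_sqrt]
  positivity

lemma jb_ge_one (ζ : EuclideanSpace ℝ (Fin 2)) : 1 ≤ jb ζ := by
  have h1 := jb_sq ζ
  have h2 : 0 ≤ jb ζ := Real.sqrt_nonneg _
  nlinarith [sq_nonneg ‖ζ‖]

lemma norm_le_jb (ζ : EuclideanSpace ℝ (Fin 2)) : ‖ζ‖ ≤ jb ζ := by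
  nlinarith [jb_sq ζ, jb_ge_one ζ, norm_nonneg ζ]

/-- Core real-variable inequality for the `Φ₂` phases. -/
lemma phi2_core (a b R p Bsq : ℝ) (ha : 1 ≤ a) (hb : 1 ≤ b)
    (ha2 : a ^ 2 = 1 + Bsq + 2 * p + R ^ 2) (hb2 : b ^ 2 = 1 + Bsq)
    (hp2 : p ^ 2 ≤ Bsq * R ^ 2) (hR : 0 < R)
    (hab2 : b ≤ a + R) :
    R / (2 * (a * b)) ≤ a - b + R ∧ R / (2 * (a * b)) ≤ R - (a - b) := by
  have habpos : (0 : ℝ) < a * b := by nlinarith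
  have hgap : R ^ 2 ≤ (a * b) ^ 2 - (b ^ 2 + p) ^ 2 := by nlinarith [hp2]
  have hkey : R ^ 2 ≤ 2 * (a * b) * (a * b - (b ^ 2 + p)) := by
    nlinarith [sq_nonneg (a * b - (b ^ 2 + p)), hgap]
  have hid : R ^ 2 - (a - b) ^ 2 = 2 * (a * b - (b ^ 2 + p)) := by
    linear_combination hb2 - ha2
  have hfac : R ^ 2 ≤ (R - (a - b)) * (a - b + R) * (a * b) := by
    have h3 : (R - (a - b)) * (a - b + R) * (a * b)
        = 2 * (a * b) * (a * b - (b ^ 2 + p)) := by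
      have h4 : (R - (a - b)) * (a - b + R) = 2 * (a * b - (b ^ 2 + p)) := by
        linear_combination hid
      rw [h4]; ring
    linarith [hkey, h3.ge, h3.le]
  have habR : 0 ≤ a - b + R := by linarith
  constructor
  · rw [div_le_iff₀ (by positivity)]
    nlinarith [hfac, mul_nonneg (mul_nonneg habR habpos.le)
      (show (0:ℝ) ≤ R + (a - b) by linarith), hR]
  · rw [div_le_iff₀ (by positivity)]
    nlinarith [hfac, mul_nonneg (sq_nonneg (R - (a - b))) habpos.le, hR]

set_option maxHeartbeats 1600000 in
/-- Lower bounds on the phase functions `Φ₁± = ⟨ξ⟩ + ⟨ξ-η⟩ ± |η|` and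
`Φ₂± = ⟨ξ⟩ - ⟨ξ-η⟩ ± |η|`: there is a universal constant `c > 0` with
`|Φ₂±| ≥ c|η|/(⟨η⟩+⟨ξ-η⟩)²` for `η ≠ 0` and `|Φ₁±| ≥ c(⟨ξ⟩⁻¹ + ⟨ξ-η⟩⁻¹)`. -/
theorem stmt19 :
    ∃ c : ℝ, 0 < c ∧
      ∀ ξ η : EuclideanSpace ℝ (Fin 2),
        ((η ≠ 0 →
          c * ‖η‖ / (jb η + jb (ξ - η)) ^ 2 ≤ |jb ξ - jb (ξ - η) + ‖η‖| ∧
          c * ‖η‖ / (jb η + jb (ξ - η)) ^ 2 ≤ |jb ξ - jb (ξ - η) - ‖η‖|) ∧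
        (c * ((jb ξ)⁻¹ + (jb (ξ - η))⁻¹) ≤ |jb ξ + jb (ξ - η) + ‖η‖| ∧
          c * ((jb ξ)⁻¹ + (jb (ξ - η))⁻¹) ≤ |jb ξ + jb (ξ - η) - ‖η‖|)) := by
  refine ⟨1/2, by norm_num, fun ξ η => ?_⟩
  set a := jb ξ with ha
  set b := jb (ξ - η) with hb
  set h := jb η with hh
  have ha1 : 1 ≤ a := jb_ge_one ξ
  have hb1 : 1 ≤ b := jb_ge_one (ξ - η)
  have hh1 : 1 ≤ h := jb_ge_one η
  have ha2 : a ^ 2 = 1 + ‖ξ‖ ^ 2 := jb_sq ξ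
  have hb2 : b ^ 2 = 1 + ‖ξ - η‖ ^ 2 := jb_sq (ξ - η)
  have hAa : ‖ξ‖ ≤ a := norm_le_jb ξ
  have hBb : ‖ξ - η‖ ≤ b := norm_le_jb (ξ - η)
  have hRh : ‖η‖ ≤ h := norm_le_jb η
  have hR0 : (0:ℝ) ≤ ‖η‖ := norm_nonneg _
  have hB0 : (0:ℝ) ≤ ‖ξ - η‖ := norm_nonneg _
  have hxi : ξ = (ξ - η) + η := by abel
  constructor
  · -- Φ₂ bounds
    intro hη
    have hRpos : 0 < ‖η‖ := norm_pos_iff.mpr hη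
    set p : ℝ := (inner ℝ (ξ - η) η : ℝ) with hp
    have hdecomp : ‖ξ‖ ^ 2 = 1 + ‖ξ - η‖ ^ 2 + 2 * p + ‖η‖ ^ 2 - 1 := by
      nth_rewrite 1 [hxi]
      rw [norm_add_sq_real (ξ - η) η]
      ring
    have hCS : |p| ≤ ‖ξ - η‖ * ‖η‖ := abs_real_inner_le_norm (ξ - η) η
    have hp2 : p ^ 2 ≤ ‖ξ - η‖ ^ 2 * ‖η‖ ^ 2 := by
      nlinarith [abs_nonneg p, sq_abs p, mul_nonneg hB0 hR0]
    have ha2' : a ^ 2 = 1 + ‖ξ - η‖ ^ 2 + 2 * p + ‖η‖ ^ 2 := by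
      rw [ha2, hdecomp]; ring
    have hab2 : b ≤ a + ‖η‖ := by
      have hBA : ‖ξ - η‖ ≤ ‖ξ‖ + ‖η‖ := norm_sub_le _ _
      nlinarith [sq_nonneg (a + ‖η‖ - b), norm_nonneg ξ]
    obtain ⟨hc1, hc2⟩ := phi2_core a b ‖η‖ p (‖ξ - η‖ ^ 2) ha1 hb1 ha2' hb2
      hp2 hRpos hab2
    have habpos : (0:ℝ) < a * b := by nlinarith
    have hLpos : 0 < ‖η‖ / (2 * (a * b)) := by positivity
    have habD : a * b ≤ (h + b) ^ 2 := by
      have hab1 : a ≤ b + ‖η‖ := by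
        have hAB : ‖ξ‖ ≤ ‖ξ - η‖ + ‖η‖ := by
          nth_rewrite 1 [hxi]; exact norm_add_le _ _
        nlinarith [sq_nonneg (b + ‖η‖ - a), norm_nonneg ξ]
      nlinarith [hab1, hRh, hb1, hh1, hRpos]
    have hfinal : 1 / 2 * ‖η‖ / (h + b) ^ 2 ≤ ‖η‖ / (2 * (a * b)) := by
      rw [div_le_div_iff₀ (by positivity) (by positivity)]
      nlinarith [mul_le_mul_of_nonneg_left habD hR0]
    constructor
    · rw [abs_of_pos (by linarith)]
      linarith
    · have habs : |a - b - ‖η‖| = ‖η‖ - (a - b) := by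
        rw [abs_of_neg (by linarith)]; ring
      rw [habs]
      linarith
  · -- Φ₁ bounds
    have hapos : (0:ℝ) < a := by linarith
    have hbpos : (0:ℝ) < b := by linarith
    have hainv : a⁻¹ ≤ 2 * (a - ‖ξ‖) := by
      have hi : a⁻¹ * a = 1 := inv_mul_cancel₀ (ne_of_gt hapos)
      nlinarith [sq_nonneg (a - ‖ξ‖), inv_pos.mpr hapos]
    have hbinv : b⁻¹ ≤ 2 * (b - ‖ξ - η‖) := by
      have hi : b⁻¹ * b = 1 := inv_mul_cancel₀ (ne_of_gt hbpos)
      nlinarith [sq_nonneg (b - ‖ξ - η‖), inv_pos.mpr hbpos]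
    have hRAB : ‖η‖ ≤ ‖ξ‖ + ‖ξ - η‖ := by
      calc ‖η‖ = ‖ξ - (ξ - η)‖ := by congr 1; abel
      _ ≤ ‖ξ‖ + ‖ξ - η‖ := norm_sub_le _ _
    have hmain : 1 / 2 * (a⁻¹ + b⁻¹) ≤ a + b - ‖η‖ := by linarith
    have hpos : 0 < a + b - ‖η‖ := by
      have h1 : 0 < a⁻¹ := inv_pos.mpr hapos
      have h2 : 0 < b⁻¹ := inv_pos.mpr hbpos
      linarith
    constructor
    · rw [abs_of_pos (by linarith)]
      linarith
    · rw [abs_of_pos hpos]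
      exact hmain
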